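/- For every r ≥ 0, every t > 0 and every i ∈ {1,…,d}, ∫_{ℝ^d} e^{r|ψ|} |K^i(ψ,t)| dψ ≤ a₁^{(d+1)/2} · e^{−b₀ t} · (t|α|)^{−1/2} · I_d(νt), where ν := |α|² r² / Re α. -/

import Mathlib

open MeasureTheory RealInnerProductSpace

/-- Rotation `e^{tS}x` given by the matrix exponential. -/
noncomputable def ouRot (d : ℕ) (S : Matrix (Fin d) (Fin d) ℝ) (t : ℝ)
    (x : EuclideanSpace ℝ (Fin d)) : EuclideanSpace ℝ (Fin d) :=
  WithLp.toLp 2 (Matrix.mulVec (NormedSpace.exp (t • S)) x)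

/-- The radial kernel `K(ψ,t) = (4παt)^{-d/2} exp(-δt - |ψ|²/(4αt))`. -/
noncomputable def ouK (d : ℕ) (α δ : ℂ) (ψ : EuclideanSpace ℝ (Fin d)) (t : ℝ) : ℂ :=
  (4 * (Real.pi : ℂ) * α * t) ^ (-(d : ℂ) / 2) *
    Complex.exp (-(δ * t) - ((‖ψ‖ ^ 2 : ℝ) : ℂ) / (4 * α * t))

/-- The first-derivative radial kernel `K^i(ψ,t) = -(2tα)⁻¹ ⟨ψ, e^{tS}e_i⟩ K(ψ,t)`. -/
noncomputable def ouKi (d : ℕ) (α δ : ℂ) (S : Matrix (Fin d) (Fin d) ℝ)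
    (i : Fin d) (ψ : EuclideanSpace ℝ (Fin d)) (t : ℝ) : ℂ :=
  -(2 * t * α)⁻¹ * ((⟪ψ, ouRot d S t (EuclideanSpace.single i (1 : ℝ))⟫ : ℝ) : ℂ) *
    ouK d α δ ψ t

/-- `I_m(μ) = (2/Γ(d/2)) ∫_0^∞ s^m e^{-s² + 2√μ s} ds`. -/
noncomputable def ouI (d m : ℕ) (μ : ℝ) : ℝ :=
  (2 / Real.Gamma ((d : ℝ) / 2)) *
    ∫ s in Set.Ioi (0 : ℝ), s ^ m * Real.exp (-s ^ 2 + 2 * Real.sqrt μ * s)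

open scoped Matrix

section aux

lemma ouRot_orth (d : ℕ) (S : Matrix (Fin d) (Fin d) ℝ) (hS : S.transpose = -S) (t : ℝ) :
    (NormedSpace.exp (t • S))ᵀ * NormedSpace.exp (t • S) = 1 := by
  rw [← Matrix.exp_transpose, Matrix.transpose_smul, hS, smul_neg]
  rw [← Matrix.exp_add_of_commute _ _ ((Commute.refl (t • S)).neg_left)]
  rw [neg_add_cancel]
  exact NormedSpace.exp_zero

lemma ouRot_norm (d : ℕ) (S : Matrix (Fin d) (Fin d) ℝ) (hS : S.transpose = -S) (t : ℝ)
    (x : EuclideanSpace ℝ (Fin d)) :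
    ‖ouRot d S t x‖ = ‖x‖ := by
  set M := NormedSpace.exp (t • S) with hMdef
  have hM : Mᵀ * M = 1 := ouRot_orth d S hS t
  have key : (M.mulVec x) ⬝ᵥ (M.mulVec x) = x ⬝ᵥ x := by
    rw [Matrix.dotProduct_mulVec, ← Matrix.mulVec_transpose, Matrix.mulVec_mulVec, hM,
      Matrix.one_mulVec]
  rw [EuclideanSpace.norm_eq x, show ‖ouRot d S t x‖
      = Real.sqrt (∑ i, ‖ouRot d S t x i‖^2) from EuclideanSpace.norm_eq _]
  congr 1
  simpa [ouRot, PiLp.toLp_apply, dotProduct, sq, Real.norm_eq_abs, abs_mul_abs_self] using key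

lemma ouK_abs (d : ℕ) (α δ : ℂ) (hα : 0 < α.re) (ψ : EuclideanSpace ℝ (Fin d)) (t : ℝ)
    (ht : 0 < t) :
    ‖ouK d α δ ψ t‖
      = (4 * Real.pi * ‖α‖ * t) ^ (-(d : ℝ)/2)
        * Real.exp (-δ.re * t - α.re / (4 * ‖α‖ ^ 2 * t) * ‖ψ‖ ^ 2) := by
  have hα0 : α ≠ 0 := fun h => by simp [h] at hα
  have habs : 0 < ‖α‖ := norm_pos_iff.mpr hα0
  have hz : (4 * (Real.pi : ℂ) * α * t) ≠ 0 := by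
    apply mul_ne_zero (mul_ne_zero (mul_ne_zero _ _) hα0) <;>
      simp [Complex.ofReal_ne_zero, Real.pi_ne_zero, ht.ne']
  rw [ouK, norm_mul, Complex.norm_cpow_of_ne_zero hz]
  have h1 : ‖4 * (Real.pi : ℂ) * α * t‖ = 4 * Real.pi * ‖α‖ * t := by
    simp [norm_mul, Complex.norm_real, abs_of_pos Real.pi_pos, abs_of_pos ht]
  have h2 : ((-(d : ℂ) / 2).im) = 0 := by simp
  have h3 : ((-(d : ℂ) / 2).re) = -(d : ℝ)/2 := by simp
  rw [h1, h2, h3, mul_zero, Real.exp_zero, div_one, Complex.norm_exp]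
  congr 2
  have hre : ((((‖ψ‖ ^ 2 : ℝ) : ℂ)) / (4 * α * t)).re
      = α.re / (4 * ‖α‖ ^ 2 * t) * ‖ψ‖ ^ 2 := by
    rw [div_eq_mul_inv, Complex.mul_re, Complex.ofReal_re, Complex.ofReal_im, zero_mul,
      sub_zero, Complex.inv_re]
    have hn : Complex.normSq (4 * α * ↑t) = 16 * ‖α‖ ^ 2 * t ^ 2 := by
      rw [Complex.normSq_eq_norm_sq]
      simp [norm_mul, Complex.norm_real, abs_of_pos ht]
      ring
    rw [hn]
    have h4 : (4 * α * (t : ℂ)).re = 4 * α.re * t := by simp [Complex.mul_re]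
    rw [h4]
    field_simp
    ring
  rw [Complex.sub_re, hre]
  have h5 : (δ * (t : ℂ)).re = δ.re * t := by simp [Complex.mul_re]
  rw [Complex.neg_re, h5]
  ring

lemma const_id (A R t : ℝ) (hA : 0 < A) (hR : 0 < R) (ht : 0 < t) (p : ℝ) :
    Real.pi ^ (p/2) * ((2*t*A)⁻¹ * (4*Real.pi*A*t) ^ (-p/2)) * ((R/(4*A^2*t)) ^ ((p+1)/2))⁻¹
      = (A/R) ^ ((p+1)/2) * (t*A) ^ (-(1:ℝ)/2) := by
  have hπ := Real.pi_pos
  have e1 : Real.pi ^ (p/2) = Real.exp (Real.log Real.pi * (p/2)) :=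
    Real.rpow_def_of_pos hπ _
  have e2 : (2*t*A)⁻¹ = Real.exp (-(Real.log 2 + Real.log t + Real.log A)) := by
    rw [Real.exp_neg]
    congr 1
    rw [← Real.log_mul (by positivity) ht.ne', ← Real.log_mul (by positivity) hA.ne',
      Real.exp_log (by positivity)]
  have e3 : (4*Real.pi*A*t) ^ (-p/2)
      = Real.exp ((Real.log 4 + Real.log Real.pi + Real.log A + Real.log t) * (-p/2)) := by
    rw [Real.rpow_def_of_pos (by positivity), Real.log_mul (by positivity) ht.ne',
      Real.log_mul (by positivity) hA.ne', Real.log_mul (by positivity) hπ.ne']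
  have e4 : ((R/(4*A^2*t)) ^ ((p+1)/2))⁻¹
      = Real.exp (-((Real.log R - (Real.log 4 + 2*Real.log A + Real.log t)) * ((p+1)/2))) := by
    rw [Real.exp_neg]
    congr 1
    rw [Real.rpow_def_of_pos (by positivity), Real.exp_eq_exp,
      Real.log_div hR.ne' (by positivity), Real.log_mul (by positivity) ht.ne',
      Real.log_mul (by positivity) (by positivity : (A^2:ℝ) ≠ 0), Real.log_pow]
    push_cast; ring
  have e5 : (A/R) ^ ((p+1)/2) = Real.exp ((Real.log A - Real.log R) * ((p+1)/2)) := by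
    rw [Real.rpow_def_of_pos (by positivity), Real.log_div hA.ne' hR.ne']
  have e6 : (t*A) ^ (-(1:ℝ)/2) = Real.exp ((Real.log t + Real.log A) * (-(1:ℝ)/2)) := by
    rw [Real.rpow_def_of_pos (by positivity), Real.log_mul ht.ne' hA.ne']
  have l4 : Real.log 4 = 2 * Real.log 2 := by
    rw [show (4:ℝ) = 2^2 by norm_num, Real.log_pow]; push_cast; ring
  rw [e1, e2, e3, e4, e5, e6, ← Real.exp_add, ← Real.exp_add, ← Real.exp_add, ← Real.exp_add,
    Real.exp_eq_exp, l4]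
  ring

lemma gauss_int (d : ℕ) (b : ℝ) (hb : 0 < b) :
    Integrable (fun ψ : EuclideanSpace ℝ (Fin d) => Real.exp (-b * ‖ψ‖^2)) := by
  have h := (GaussianFourier.integrable_cexp_neg_mul_sq_norm_add
    (V := EuclideanSpace ℝ (Fin d)) (b := (b:ℂ)) (by simpa using hb) 0 0).norm
  simpa [Complex.norm_exp, ← Complex.ofReal_pow] using h

lemma fact1 (u : ℝ) : u * Real.exp (-(u^2)) ≤ 1 := by
  have h := Real.add_one_le_exp (u^2)
  have h2 : u ≤ Real.exp (u^2) := by nlinarith [sq_nonneg (u-1)]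
  have h3 : 0 < Real.exp (u^2) := Real.exp_pos _
  rw [Real.exp_neg, mul_inv_le_iff₀ h3, one_mul]
  exact h2

lemma dom_bound (r c C ρ : ℝ) (hc : 0 < c) (hC : 0 ≤ C) :
    C * (ρ * Real.exp (r*ρ - c*ρ^2))
      ≤ (C * (2/Real.sqrt c) * Real.exp (r^2/c)) * Real.exp (-(c/2) * ρ^2) := by
  have hsc : 0 < Real.sqrt c := Real.sqrt_pos.2 hc
  have hsq : (Real.sqrt c/2*ρ)^2 = c/4*ρ^2 := by
    rw [mul_pow, div_pow, Real.sq_sqrt hc.le]; ring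
  have h1 : (Real.sqrt c/2*ρ) * Real.exp (-(c/4*ρ^2)) ≤ 1 := by
    rw [← hsq]; exact fact1 _
  have h2 : Real.exp (r*ρ - c/4*ρ^2) ≤ Real.exp (r^2/c) := by
    apply Real.exp_le_exp.2
    rw [← sub_nonneg]
    have h5 : r^2/c - (r*ρ - c/4*ρ^2) = (c*ρ - 2*r)^2/(4*c) := by field_simp; ring
    rw [h5]; positivity
  have key : ρ * Real.exp (r*ρ - c*ρ^2)
      = (2/Real.sqrt c) * (Real.sqrt c/2*ρ) *
        (Real.exp (-(c/4*ρ^2)) * Real.exp (r*ρ - c/4*ρ^2) * Real.exp (-(c/2)*ρ^2)) := by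
    rw [← Real.exp_add, ← Real.exp_add,
      show -(c/4*ρ^2) + (r*ρ - c/4*ρ^2) + -(c/2)*ρ^2 = r*ρ - c*ρ^2 by ring]
    have h4 : (2/Real.sqrt c) * (Real.sqrt c/2*ρ) = ρ := by field_simp
    rw [h4]
  rw [key]
  have hmain : (Real.sqrt c/2*ρ * Real.exp (-(c/4*ρ^2))) * Real.exp (r*ρ - c/4*ρ^2)
      ≤ 1 * Real.exp (r^2/c) :=
    mul_le_mul h1 h2 (Real.exp_pos _).le zero_le_one
  calc C * ((2/Real.sqrt c) * (Real.sqrt c/2*ρ) *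
        (Real.exp (-(c/4*ρ^2)) * Real.exp (r*ρ - c/4*ρ^2) * Real.exp (-(c/2)*ρ^2)))
      = (C * (2/Real.sqrt c) * Real.exp (-(c/2)*ρ^2)) *
        ((Real.sqrt c/2*ρ * Real.exp (-(c/4*ρ^2))) * Real.exp (r*ρ - c/4*ρ^2)) := by ring
    _ ≤ (C * (2/Real.sqrt c) * Real.exp (-(c/2)*ρ^2)) * (1 * Real.exp (r^2/c)) := by
        apply mul_le_mul_of_nonneg_left hmain (by positivity)
    _ = (C * (2/Real.sqrt c) * Real.exp (r^2/c)) * Real.exp (-(c/2) * ρ^2) := by ring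

end aux

/-- exponentially weighted integral bound for the kernel `K^i`. -/
theorem ouKi_exp_weighted_integral_bound
    (d : ℕ) (hd : 1 ≤ d) (α δ : ℂ) (hα : 0 < α.re)
    (S : Matrix (Fin d) (Fin d) ℝ) (hS : S.transpose = -S)
    (r : ℝ) (hr : 0 ≤ r) (t : ℝ) (ht : 0 < t) (i : Fin d) :
    (∫ ψ : EuclideanSpace ℝ (Fin d), Real.exp (r * ‖ψ‖) * ‖ouKi d α δ S i ψ t‖)
      ≤ (‖α‖ / α.re) ^ (((d : ℝ) + 1) / 2) * Real.exp (-δ.re * t) *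
        (t * ‖α‖) ^ (-(1 : ℝ) / 2) *
        ouI d d ((‖α‖ ^ 2 * r ^ 2 / α.re) * t) := by
  have hα0 : α ≠ 0 := fun h => by simp [h] at hα
  set A := ‖α‖ with hAdef
  have hA : 0 < A := norm_pos_iff.mpr hα0
  set c : ℝ := α.re / (4 * A ^ 2 * t) with hcdef
  have hc : 0 < c := by positivity
  have hsc : 0 < Real.sqrt c := Real.sqrt_pos.2 hc
  set C : ℝ := (2*t*A)⁻¹ * (4*Real.pi*A*t) ^ (-(d:ℝ)/2) * Real.exp (-δ.re*t) with hCdef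
  have hC : 0 < C := by positivity
  set μ0 : ℝ := A ^ 2 * r ^ 2 / α.re * t with hμ0def
  have hμ0 : 0 ≤ μ0 := by positivity
  set m : ℝ := 2 * Real.sqrt μ0 with hmdef
  set J : ℝ := ∫ s in Set.Ioi (0:ℝ), s ^ d * Real.exp (-s^2 + m*s) with hJdef
  -- Step 1 : pointwise bound
  have step1 : ∀ ψ : EuclideanSpace ℝ (Fin d),
      Real.exp (r * ‖ψ‖) * ‖ouKi d α δ S i ψ t‖
        ≤ C * (‖ψ‖ * Real.exp (r*‖ψ‖ - c*‖ψ‖^2)) := by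
    intro ψ
    have hKi : ‖ouKi d α δ S i ψ t‖
        = (2*t*A)⁻¹ * |(⟪ψ, ouRot d S t (EuclideanSpace.single i (1:ℝ))⟫ : ℝ)|
          * ‖ouK d α δ ψ t‖ := by
      rw [ouKi, norm_mul, norm_mul, norm_neg, norm_inv, norm_mul, norm_mul,
        Complex.norm_real, Complex.norm_real, Real.norm_eq_abs, Real.norm_eq_abs, Complex.norm_two, abs_of_pos ht]
    have hin : |(⟪ψ, ouRot d S t (EuclideanSpace.single i (1:ℝ))⟫ : ℝ)| ≤ ‖ψ‖ := by
      calc |(⟪ψ, ouRot d S t (EuclideanSpace.single i (1:ℝ))⟫ : ℝ)|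
          ≤ ‖ψ‖ * ‖ouRot d S t (EuclideanSpace.single i (1:ℝ))‖ := abs_real_inner_le_norm _ _
        _ = ‖ψ‖ := by rw [ouRot_norm d S hS, EuclideanSpace.norm_single, norm_one, mul_one]
    rw [hKi, ouK_abs d α δ hα ψ t ht, ← hAdef, ← hcdef]
    have hexp : Real.exp (r*‖ψ‖) * Real.exp (-δ.re*t - c*‖ψ‖^2)
        = Real.exp (-δ.re*t) * Real.exp (r*‖ψ‖ - c*‖ψ‖^2) := by
      rw [← Real.exp_add, ← Real.exp_add]; ring_nf
    calc Real.exp (r*‖ψ‖) * ((2*t*A)⁻¹ *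
          |(⟪ψ, ouRot d S t (EuclideanSpace.single i (1:ℝ))⟫ : ℝ)| *
          ((4*Real.pi*A*t) ^ (-(d:ℝ)/2) * Real.exp (-δ.re*t - c*‖ψ‖^2)))
        = (C * Real.exp (r*‖ψ‖ - c*‖ψ‖^2)) *
          |(⟪ψ, ouRot d S t (EuclideanSpace.single i (1:ℝ))⟫ : ℝ)| := by
          rw [hCdef]
          linear_combination ((2*t*A)⁻¹ *
            |(⟪ψ, ouRot d S t (EuclideanSpace.single i (1:ℝ))⟫ : ℝ)| *
            (4*Real.pi*A*t) ^ (-(d:ℝ)/2)) * hexp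
      _ ≤ (C * Real.exp (r*‖ψ‖ - c*‖ψ‖^2)) * ‖ψ‖ := by
          apply mul_le_mul_of_nonneg_left hin (by positivity)
      _ = C * (‖ψ‖ * Real.exp (r*‖ψ‖ - c*‖ψ‖^2)) := by ring
  -- Step 2 : integrability of the dominating radial function
  have step2 : Integrable (fun ψ : EuclideanSpace ℝ (Fin d) =>
      C * (‖ψ‖ * Real.exp (r*‖ψ‖ - c*‖ψ‖^2))) := by
    apply Integrable.mono' (((gauss_int d (c/2) (by positivity)).const_mul
      (C * (2/Real.sqrt c) * Real.exp (r^2/c))))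
    · apply Continuous.aestronglyMeasurable
      fun_prop
    · refine ae_of_all _ fun ψ => ?_
      rw [Real.norm_eq_abs, abs_of_nonneg (by positivity)]
      have := dom_bound r c C ‖ψ‖ hc hC.le
      simpa [neg_mul, mul_comm] using this
  -- Step 3 : comparison
  have step3 : (∫ ψ : EuclideanSpace ℝ (Fin d),
      Real.exp (r * ‖ψ‖) * ‖ouKi d α δ S i ψ t‖)
      ≤ ∫ ψ : EuclideanSpace ℝ (Fin d), C * (‖ψ‖ * Real.exp (r*‖ψ‖ - c*‖ψ‖^2)) :=
    integral_mono_of_nonneg (ae_of_all _ fun ψ => by positivity) step2 (ae_of_all _ step1)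
  refine step3.trans_eq ?_
  -- Step 4 : evaluation of the radial integral
  haveI : Nonempty (Fin d) := ⟨⟨0, hd⟩⟩
  have hdim : Module.finrank ℝ (EuclideanSpace ℝ (Fin d)) = d := finrank_euclideanSpace_fin
  have hpolar := MeasureTheory.integral_fun_norm_addHaar
    (volume : Measure (EuclideanSpace ℝ (Fin d)))
    (fun ρ : ℝ => C * (ρ * Real.exp (r*ρ - c*ρ^2)))
  rw [hdim] at hpolar
  rw [show (fun ψ : EuclideanSpace ℝ (Fin d) => C * (‖ψ‖ * Real.exp (r*‖ψ‖ - c*‖ψ‖^2)))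
      = fun ψ => (fun ρ : ℝ => C * (ρ * Real.exp (r*ρ - c*ρ^2))) ‖ψ‖ from rfl, hpolar]
  -- volume of the unit ball
  have hΓpos : 0 < Real.Gamma ((d:ℝ)/2) := Real.Gamma_pos_of_pos (by positivity)
  have hvol : ((volume : Measure (EuclideanSpace ℝ (Fin d))) (Metric.ball 0 1)).toReal
      = Real.sqrt Real.pi ^ d / Real.Gamma ((d:ℝ)/2 + 1) := by
    rw [EuclideanSpace.volume_ball]
    simp [Fintype.card_fin]
    positivity
  -- inner integral
  have hfun : (fun y : ℝ => y^(d-1) • (C * (y * Real.exp (r*y - c*y^2))))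
      = fun y : ℝ => C * (y^d * Real.exp (r*y - c*y^2)) := by
    funext y
    simp only [smul_eq_mul]
    rw [show y^d = y^(d-1)*y by rw [← pow_succ]; congr 1; omega]
    ring
  have hm : m * Real.sqrt c = r := by
    have hμ0c : μ0 * c = (r/2)^2 := by
      rw [hμ0def, hcdef]
      field_simp
      ring
    have h6 : Real.sqrt μ0 * Real.sqrt c = r/2 := by
      rw [← Real.sqrt_mul hμ0, hμ0c, Real.sqrt_sq (by positivity)]
    rw [hmdef]
    rw [mul_assoc, h6]
    ring
  have e0' : ∀ y : ℝ, (Real.sqrt c*y)^d * Real.exp (-(Real.sqrt c*y)^2 + m*(Real.sqrt c*y))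
      = (Real.sqrt c)^d * (y^d * Real.exp (r*y - c*y^2)) := by
    intro y
    rw [mul_pow, mul_pow, Real.sq_sqrt hc.le,
      show m*(Real.sqrt c*y) = (m*Real.sqrt c)*y by ring, hm]
    ring_nf
  have hIc : (∫ y in Set.Ioi (0:ℝ), (Real.sqrt c*y)^d
        * Real.exp (-(Real.sqrt c*y)^2 + m*(Real.sqrt c*y)))
      = (Real.sqrt c)^d * ∫ y in Set.Ioi (0:ℝ), y^d * Real.exp (r*y - c*y^2) := by
    simp_rw [e0']
    rw [MeasureTheory.integral_const_mul]
  have hsubI := MeasureTheory.integral_comp_mul_left_Ioi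
    (fun x : ℝ => x^d * Real.exp (-x^2 + m*x)) 0 hsc
  simp only [mul_zero] at hsubI
  have hqI : (∫ y in Set.Ioi (0:ℝ), y^d * Real.exp (r*y - c*y^2))
      = ((Real.sqrt c)^d)⁻¹ * ((Real.sqrt c)⁻¹ * J) := by
    have h7 : (Real.sqrt c)^d * ∫ y in Set.Ioi (0:ℝ), y^d * Real.exp (r*y - c*y^2)
        = (Real.sqrt c)⁻¹ * J := by
      rw [← hIc]
      rw [show (∫ y in Set.Ioi (0:ℝ), (Real.sqrt c*y)^d
          * Real.exp (-(Real.sqrt c*y)^2 + m*(Real.sqrt c*y)))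
        = ∫ y in Set.Ioi (0:ℝ),
          (fun x : ℝ => x^d * Real.exp (-x^2 + m*x)) (Real.sqrt c * y) from rfl, hsubI]
      rw [smul_eq_mul, hJdef]
    exact (eq_inv_mul_iff_mul_eq₀ (pow_ne_zero d hsc.ne')).2 h7
  have hd0 : (0:ℝ) < (d:ℝ) := by exact_mod_cast hd
  have hΓ1 : Real.Gamma ((d:ℝ)/2 + 1) = ((d:ℝ)/2) * Real.Gamma ((d:ℝ)/2) :=
    Real.Gamma_add_one (by positivity)
  have hπd : (Real.sqrt Real.pi)^d = Real.pi ^ ((d:ℝ)/2) := by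
    rw [Real.sqrt_eq_rpow, ← Real.rpow_natCast (Real.pi ^ ((1:ℝ)/2)) d,
      ← Real.rpow_mul Real.pi_pos.le]
    congr 1
    ring
  have hcpow : ((Real.sqrt c)^d)⁻¹ * ((Real.sqrt c)⁻¹ * J)
      = (c ^ (((d:ℝ)+1)/2))⁻¹ * J := by
    rw [← mul_assoc, ← mul_inv, ← pow_succ]
    congr 2
    rw [Real.sqrt_eq_rpow, ← Real.rpow_natCast (c ^ ((1:ℝ)/2)) (d+1), ← Real.rpow_mul hc.le]
    congr 1
    push_cast
    ring
  have hdd : (d:ℝ) * ((Real.sqrt Real.pi)^d / Real.Gamma ((d:ℝ)/2 + 1))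
      = 2 * (Real.pi ^ ((d:ℝ)/2) / Real.Gamma ((d:ℝ)/2)) := by
    rw [hπd, hΓ1]
    field_simp
  have hcid := const_id A α.re t hA hα ht (d:ℝ)
  rw [← hcdef] at hcid
  rw [hfun, MeasureTheory.integral_const_mul, hqI, hcpow, measureReal_def, hvol, nsmul_eq_mul, smul_eq_mul, ouI,
    ← hmdef, ← hJdef, hCdef]
  calc (d:ℝ) * ((Real.sqrt Real.pi)^d / Real.Gamma ((d:ℝ)/2 + 1) *
        ((2*t*A)⁻¹ * (4*Real.pi*A*t) ^ (-(d:ℝ)/2) * Real.exp (-δ.re*t) *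
          ((c ^ (((d:ℝ)+1)/2))⁻¹ * J)))
      = ((d:ℝ) * ((Real.sqrt Real.pi)^d / Real.Gamma ((d:ℝ)/2 + 1))) *
        ((2*t*A)⁻¹ * (4*Real.pi*A*t) ^ (-(d:ℝ)/2) * Real.exp (-δ.re*t) *
          ((c ^ (((d:ℝ)+1)/2))⁻¹ * J)) := by ring
    _ = (2 * (Real.pi ^ ((d:ℝ)/2) / Real.Gamma ((d:ℝ)/2))) *
        ((2*t*A)⁻¹ * (4*Real.pi*A*t) ^ (-(d:ℝ)/2) * Real.exp (-δ.re*t) *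
          ((c ^ (((d:ℝ)+1)/2))⁻¹ * J)) := by rw [hdd]
    _ = (A/α.re) ^ (((d:ℝ)+1)/2) * Real.exp (-δ.re*t) * (t*A) ^ (-(1:ℝ)/2) *
        (2 / Real.Gamma ((d:ℝ)/2) * J) := by
        linear_combination (2 * Real.exp (-δ.re*t) * J / Real.Gamma ((d:ℝ)/2)) * hcid
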